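/- Let 𝖠 be a graded simple algebra, finite-dimensional over a graded field 𝖪, and let 𝖨 ⊆ 𝖠 be a homogeneous right ideal. Then there is a homogeneous idempotent e ∈ 𝖠 of degree 0 such that 𝖨 = e𝖠. -/

import Mathlib

set_option autoImplicit false
set_option maxHeartbeats 1000000
set_option synthInstance.maxHeartbeats 400000
set_option linter.unusedSectionVars false

noncomputable section
namespace PaperVal
open DirectSum Module Submodule

section Aux
variable {Γ : Type} [AddCommGroup Γ] [LinearOrder Γ] [IsOrderedAddMonoid Γ]
/-- component of a finite sum of homogeneous elements -/
lemma proj_sum {R : Type} [Ring R] (ℛ : Γ → AddSubgroup R) [GradedRing ℛ]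
    {ι : Type} (s : Finset ι) (g : ι → R) (d : ι → Γ)
    (hg : ∀ i ∈ s, g i ∈ ℛ (d i)) (γ : Γ) :
    (DirectSum.decompose ℛ (∑ i ∈ s, g i) γ : R) = ∑ i ∈ s, if d i = γ then g i else 0 := by
  classical
  induction s using Finset.cons_induction with
  | empty => simp
  | cons i s his ih =>
    rw [Finset.sum_cons, Finset.sum_cons, DirectSum.decompose_add, DirectSum.add_apply,
      AddSubgroup.coe_add, ih (fun j hj => hg j (Finset.mem_cons_of_mem hj))]
    congr 1
    by_cases h : d i = γ
    · rw [if_pos h, ← h, DirectSum.decompose_of_mem_same ℛ (hg i (Finset.mem_cons_self i s))]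
    · rw [if_neg h, DirectSum.decompose_of_mem_ne ℛ (hg i (Finset.mem_cons_self i s)) h]

lemma proj_mul_left {A : Type} [Ring A] (𝒜 : Γ → AddSubgroup A) [GradedRing 𝒜]
    {x : A} {γ : Γ} (hx : x ∈ 𝒜 γ) (y : A) (δ : Γ) :
    (DirectSum.decompose 𝒜 (x * y) (γ + δ) : A) = x * (DirectSum.decompose 𝒜 y δ : A) := by
  classical
  conv_lhs => rw [← DirectSum.sum_support_decompose 𝒜 y, Finset.mul_sum]
  rw [proj_sum 𝒜 _ _ (fun ν => γ + ν)
    (fun ν _ => SetLike.mul_mem_graded hx (SetLike.coe_mem _))]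
  have : ∀ ν ∈ (DirectSum.decompose 𝒜 y).support,
      (if γ + ν = γ + δ then x * (DirectSum.decompose 𝒜 y ν : A) else 0)
      = (if ν = δ then x * (DirectSum.decompose 𝒜 y ν : A) else 0) := by
    intro ν _
    simp only [add_right_inj]
  rw [Finset.sum_congr rfl this, Finset.sum_ite_eq']
  by_cases h : δ ∈ (DirectSum.decompose 𝒜 y).support
  · rw [if_pos h]
  · rw [if_neg h]
    rw [DFinsupp.notMem_support_iff] at h
    rw [h]
    simp

lemma proj_mul_right {A : Type} [Ring A] (𝒜 : Γ → AddSubgroup A) [GradedRing 𝒜]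
    {y : A} {δ : Γ} (hy : y ∈ 𝒜 δ) (x : A) (γ : Γ) :
    (DirectSum.decompose 𝒜 (x * y) (γ + δ) : A) = (DirectSum.decompose 𝒜 x γ : A) * y := by
  classical
  conv_lhs => rw [← DirectSum.sum_support_decompose 𝒜 x, Finset.sum_mul]
  rw [proj_sum 𝒜 _ _ (fun μ => μ + δ)
    (fun μ _ => SetLike.mul_mem_graded (SetLike.coe_mem _) hy)]
  have : ∀ μ ∈ (DirectSum.decompose 𝒜 x).support,
      (if μ + δ = γ + δ then (DirectSum.decompose 𝒜 x μ : A) * y else 0)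
      = (if μ = γ then (DirectSum.decompose 𝒜 x μ : A) * y else 0) := by
    intro μ _
    simp only [add_left_inj]
  rw [Finset.sum_congr rfl this, Finset.sum_ite_eq']
  by_cases h : γ ∈ (DirectSum.decompose 𝒜 x).support
  · rw [if_pos h]
  · rw [if_neg h]
    rw [DFinsupp.notMem_support_iff] at h
    rw [h]
    simp


variable {K : Type} [CommRing K] (𝒦 : Γ → AddSubgroup K) [GradedRing 𝒦]

lemma proj_mul_left' {A : Type} [Ring A] (𝒜 : Γ → AddSubgroup A) [GradedRing 𝒜]
    {x : A} {γ : Γ} (hx : x ∈ 𝒜 γ) (y : A) (δ : Γ) :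
    (DirectSum.decompose 𝒜 (x * y) δ : A) = x * (DirectSum.decompose 𝒜 y (δ - γ) : A) := by
  have := proj_mul_left 𝒜 hx y (δ - γ)
  rwa [add_sub_cancel] at this

/-- the inverse of a nonzero homogeneous element of the graded field -/
lemma homog_inv (hKfield : ∀ x : K, x ≠ 0 → (∃ γ : Γ, x ∈ 𝒦 γ) → IsUnit x)
    {c : K} {l : Γ} (hc : c ∈ 𝒦 l) (h0 : c ≠ 0) :
    ∃ c', c' ∈ 𝒦 (-l) ∧ c * c' = 1 := by
  classical
  obtain ⟨u, hu⟩ := hKfield c h0 ⟨l, hc⟩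
  refine ⟨(↑u⁻¹ : K), ?_, by rw [← hu, Units.mul_inv]⟩
  have hcomp : ∀ μ : Γ, μ ≠ -l → (DirectSum.decompose 𝒦 (↑u⁻¹ : K) μ : K) = 0 := by
    intro μ hμ
    have h1 : c * (↑u⁻¹ : K) = 1 := by rw [← hu, Units.mul_inv]
    have h2 : (DirectSum.decompose 𝒦 (c * (↑u⁻¹ : K)) (l + μ) : K)
        = c * (DirectSum.decompose 𝒦 (↑u⁻¹ : K) μ : K) := proj_mul_left 𝒦 hc _ μ
    rw [h1] at h2
    have h3 : (DirectSum.decompose 𝒦 (1 : K) (l + μ) : K) = 0 := by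
      refine DirectSum.decompose_of_mem_ne 𝒦 (SetLike.one_mem_graded 𝒦) ?_
      intro h
      refine hμ ?_
      rw [eq_neg_iff_add_eq_zero, add_comm]
      exact h.symm
    have h4 : c * (DirectSum.decompose 𝒦 (↑u⁻¹ : K) μ : K) = 0 := by rw [← h2, h3]
    calc (DirectSum.decompose 𝒦 (↑u⁻¹ : K) μ : K)
        = ((↑u⁻¹ : K) * c) * (DirectSum.decompose 𝒦 (↑u⁻¹ : K) μ : K) := by
          rw [mul_comm (↑u⁻¹ : K) c, h1, one_mul]
      _ = (↑u⁻¹ : K) * (c * (DirectSum.decompose 𝒦 (↑u⁻¹ : K) μ : K)) := by ring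
      _ = 0 := by rw [h4, mul_zero]
  rw [← DirectSum.sum_support_decompose 𝒦 (↑u⁻¹ : K)]
  refine AddSubgroup.sum_mem _ ?_
  intro μ _
  by_cases h : μ = -l
  · subst h; exact SetLike.coe_mem _
  · rw [hcomp μ h]; exact AddSubgroup.zero_mem _

lemma homog_div (hKfield : ∀ x : K, x ≠ 0 → (∃ γ : Γ, x ∈ 𝒦 γ) → IsUnit x)
    {c c' : K} {l : Γ} (hc : c ∈ 𝒦 l) (hc' : c' ∈ 𝒦 l) (h0 : c ≠ 0) :
    ∃ f ∈ 𝒦 0, c' = f * c := by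
  obtain ⟨ci, hci, hmul⟩ := homog_inv 𝒦 hKfield hc h0
  refine ⟨c' * ci, ?_, ?_⟩
  · have := SetLike.mul_mem_graded hc' hci
    rwa [add_neg_cancel] at this
  · rw [mul_assoc, mul_comm ci c, hmul, mul_one]

/-- degree-zero part of the graded field, as a subring -/
def F0 : Subring K where
  carrier := 𝒦 0
  mul_mem' := fun {a b} ha hb => by
    have := SetLike.mul_mem_graded ha hb; rwa [zero_add] at this
  one_mem' := SetLike.one_mem_graded 𝒦
  add_mem' := fun {a b} ha hb => (𝒦 0).add_mem ha hb
  zero_mem' := (𝒦 0).zero_mem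
  neg_mem' := fun {a} ha => (𝒦 0).neg_mem ha

lemma F0_isField (hKfield : ∀ x : K, x ≠ 0 → (∃ γ : Γ, x ∈ 𝒦 γ) → IsUnit x)
    (hK : (0 : K) ≠ 1) : IsField (F0 𝒦) := by
  constructor
  · refine ⟨0, 1, ?_⟩
    intro h
    exact hK (congrArg Subtype.val h)
  · exact fun a b => Subtype.ext (mul_comm (a : K) (b : K))
  · rintro ⟨a, ha⟩ h0
    have ha0 : a ≠ 0 := fun h => h0 (Subtype.ext h)
    obtain ⟨c', hc', hmul⟩ := homog_inv 𝒦 hKfield ha ha0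
    rw [neg_zero] at hc'
    exact ⟨⟨c', hc'⟩, Subtype.ext hmul⟩


variable {A : Type} [Ring A] [Algebra K A] (𝒜 : Γ → AddSubgroup A) [GradedRing 𝒜]

lemma smul_mem_right {I : AddSubgroup A} (hIright : ∀ a : A, ∀ x ∈ I, x * a ∈ I)
    (c : K) {x : A} (hx : x ∈ I) : c • x ∈ I := by
  rw [Algebra.smul_def, Algebra.commutes]
  exact hIright _ _ hx

lemma smul_mem_piece (halg : ∀ (γ : Γ), ∀ c ∈ 𝒦 γ, algebraMap K A c ∈ 𝒜 γ)
    {c : K} {l : Γ} (hc : c ∈ 𝒦 l) {x : A} {γ : Γ} (hx : x ∈ 𝒜 γ) :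
    c • x ∈ 𝒜 (l + γ) := by
  rw [Algebra.smul_def]
  exact SetLike.mul_mem_graded (halg l c hc) hx

/-- component of a scalar multiple of a homogeneous element -/
lemma proj_smul (halg : ∀ (γ : Γ), ∀ c ∈ 𝒦 γ, algebraMap K A c ∈ 𝒜 γ)
    (k : K) {t : A} {ν : Γ} (ht : t ∈ 𝒜 ν) (δ : Γ) :
    (DirectSum.decompose 𝒜 (k • t) δ : A) = (DirectSum.decompose 𝒦 k (δ - ν) : K) • t := by
  classical
  conv_lhs => rw [← DirectSum.sum_support_decompose 𝒦 k, Finset.sum_smul]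
  rw [proj_sum 𝒜 _ _ (fun μ => μ + ν)
    (fun μ _ => smul_mem_piece 𝒦 𝒜 halg (SetLike.coe_mem _) ht)]
  have : ∀ μ ∈ (DirectSum.decompose 𝒦 k).support,
      (if μ + ν = δ then (DirectSum.decompose 𝒦 k μ : K) • t else 0)
      = (if μ = δ - ν then (DirectSum.decompose 𝒦 k μ : K) • t else 0) := by
    intro μ _
    congr 1
    rw [eq_comm, eq_sub_iff_add_eq, eq_comm]
  rw [Finset.sum_congr rfl this, Finset.sum_ite_eq']
  by_cases h : δ - ν ∈ (DirectSum.decompose 𝒦 k).support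
  · rw [if_pos h]
  · rw [if_neg h]
    rw [DFinsupp.notMem_support_iff] at h
    rw [h]
    simp

/-- graded piece as an `F0`-submodule -/
def gpiece (halg : ∀ (γ : Γ), ∀ c ∈ 𝒦 γ, algebraMap K A c ∈ 𝒜 γ) (γ : Γ) :
    Submodule (F0 𝒦) A where
  carrier := 𝒜 γ
  add_mem' := fun {a b} ha hb => (𝒜 γ).add_mem ha hb
  zero_mem' := (𝒜 γ).zero_mem
  smul_mem' := fun c {x} hx => by
    have : (c : K) • x ∈ 𝒜 (0 + γ) := smul_mem_piece 𝒦 𝒜 halg c.2 hx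
    rwa [zero_add] at this

/-- a homogeneous right ideal as an `F0`-submodule -/
def idealSub (I : AddSubgroup A) : Submodule (F0 𝒦) A where
  carrier := {x | x ∈ I ∧ ∀ c : K, c • x ∈ I}
  add_mem' := fun {a b} ha hb =>
    ⟨I.add_mem ha.1 hb.1, fun c => by rw [smul_add]; exact I.add_mem (ha.2 c) (hb.2 c)⟩
  zero_mem' := ⟨I.zero_mem, fun c => by rw [smul_zero]; exact I.zero_mem⟩
  smul_mem' := fun c {x} hx =>
    ⟨hx.2 (c : K), fun c' => by
      show c' • ((c : K) • x) ∈ I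
      rw [smul_smul]; exact hx.2 _⟩

lemma mem_idealSub {I : AddSubgroup A} (hIright : ∀ a : A, ∀ x ∈ I, x * a ∈ I) {x : A} :
    x ∈ idealSub 𝒦 I ↔ x ∈ I :=
  ⟨fun h => h.1, fun h => ⟨h, fun c => smul_mem_right hIright c h⟩⟩


lemma proj_finsum {ι : Type} (s : Finset ι) (g : ι → A) (δ : Γ) :
    (DirectSum.decompose 𝒜 (∑ i ∈ s, g i) δ : A) = ∑ i ∈ s, (DirectSum.decompose 𝒜 (g i) δ : A) := by
  classical
  induction s using Finset.cons_induction with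
  | empty => simp
  | cons i s his ih =>
    rw [Finset.sum_cons, Finset.sum_cons, DirectSum.decompose_add, DirectSum.add_apply,
      AddSubgroup.coe_add, ih]

variable (T : Finset A) (dg : A → Γ)

lemma homog_rep (halg : ∀ (γ : Γ), ∀ c ∈ 𝒦 γ, algebraMap K A c ∈ 𝒜 γ)
    (hTspan : Submodule.span K (T : Set A) = ⊤) (hdg : ∀ t ∈ T, t ∈ 𝒜 (dg t))
    {δ : Γ} {x : A} (hx : x ∈ 𝒜 δ) :
    ∃ c : A → K, (∀ t ∈ T, c t ∈ 𝒦 (δ - dg t)) ∧ x = ∑ t ∈ T, c t • t := by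
  have hx' : x ∈ Submodule.span K (T : Set A) := by rw [hTspan]; trivial
  obtain ⟨f, hf⟩ := mem_span_finset.1 hx'
  refine ⟨fun t => (DirectSum.decompose 𝒦 (f t) (δ - dg t) : K),
    fun t _ => SetLike.coe_mem _, ?_⟩
  calc x = (DirectSum.decompose 𝒜 x δ : A) := (DirectSum.decompose_of_mem_same 𝒜 hx).symm
    _ = (DirectSum.decompose 𝒜 (∑ t ∈ T, f t • t) δ : A) := by rw [hf.2]
    _ = ∑ t ∈ T, (DirectSum.decompose 𝒜 (f t • t) δ : A) := proj_finsum 𝒜 T _ δ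
    _ = ∑ t ∈ T, (DirectSum.decompose 𝒦 (f t) (δ - dg t) : K) • t :=
        Finset.sum_congr rfl (fun t ht => proj_smul 𝒦 𝒜 halg (f t) (hdg t ht) δ)

lemma gpiece_fd (hKfield : ∀ x : K, x ≠ 0 → (∃ γ : Γ, x ∈ 𝒦 γ) → IsUnit x)
    (hK : (0 : K) ≠ 1)
    (halg : ∀ (γ : Γ), ∀ c ∈ 𝒦 γ, algebraMap K A c ∈ 𝒜 γ)
    (hTspan : Submodule.span K (T : Set A) = ⊤) (hdg : ∀ t ∈ T, t ∈ 𝒜 (dg t))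
    (δ : Γ) : Module.Finite (F0 𝒦) ↥(gpiece 𝒦 𝒜 halg δ) := by
  classical
  letI : Field (F0 𝒦) := (F0_isField 𝒦 hKfield hK).toField
  have hch : ∀ t : A, ∃ c : K, c ∈ 𝒦 (δ - dg t) ∧ ((∃ c₁ ∈ 𝒦 (δ - dg t), c₁ ≠ 0) → c ≠ 0) := by
    intro t
    by_cases h : ∃ c₁ ∈ 𝒦 (δ - dg t), c₁ ≠ 0
    · obtain ⟨c₁, h1, h2⟩ := h
      exact ⟨c₁, h1, fun _ => h2⟩
    · exact ⟨0, (𝒦 _).zero_mem, fun hc => absurd hc h⟩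
  choose c0 hc0m hc0ne using hch
  suffices hle : gpiece 𝒦 𝒜 halg δ ≤ Submodule.span (F0 𝒦) ((T.image (fun t => c0 t • t)) : Set A) by
    haveI : Module.Finite (F0 𝒦) ↥(Submodule.span (F0 𝒦) ((T.image (fun t => c0 t • t)) : Set A)) :=
      Module.Finite.span_of_finite _ (Finset.finite_toSet _)
    exact Submodule.finiteDimensional_of_le hle
  intro x hx
  have hx' : x ∈ 𝒜 δ := hx
  obtain ⟨c, hc, hrep⟩ := homog_rep 𝒦 𝒜 T dg halg hTspan hdg hx'
  rw [hrep]
  refine Submodule.sum_mem _ ?_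
  intro t ht
  by_cases h0 : c t = 0
  · rw [h0, zero_smul]; exact Submodule.zero_mem _
  · have hc0 : c0 t ≠ 0 := hc0ne t ⟨c t, hc t ht, h0⟩
    obtain ⟨f, hf, hfe⟩ := homog_div 𝒦 hKfield (hc0m t) (hc t ht) hc0
    rw [hfe, mul_smul]
    have hrfl : (⟨f, hf⟩ : F0 𝒦) • (c0 t • t) = f • (c0 t • t) := rfl
    rw [← hrfl]
    refine Submodule.smul_mem _ _ (Submodule.subset_span ?_)
    exact Finset.mem_coe.2 (Finset.mem_image_of_mem _ ht)

/-- the finite-dimensional window -/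
def bigW (halg : ∀ (γ : Γ), ∀ c ∈ 𝒦 γ, algebraMap K A c ∈ 𝒜 γ) : Submodule (F0 𝒦) A :=
  T.sup (fun t => gpiece 𝒦 𝒜 halg (dg t))

lemma bigW_fd (hKfield : ∀ x : K, x ≠ 0 → (∃ γ : Γ, x ∈ 𝒦 γ) → IsUnit x)
    (hK : (0 : K) ≠ 1)
    (halg : ∀ (γ : Γ), ∀ c ∈ 𝒦 γ, algebraMap K A c ∈ 𝒜 γ)
    (hTspan : Submodule.span K (T : Set A) = ⊤) (hdg : ∀ t ∈ T, t ∈ 𝒜 (dg t)) :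
    Module.Finite (F0 𝒦) ↥(bigW 𝒦 𝒜 T dg halg) := by
  letI : Field (F0 𝒦) := (F0_isField 𝒦 hKfield hK).toField
  haveI : ∀ t : A, FiniteDimensional (F0 𝒦) ↥(gpiece 𝒦 𝒜 halg (dg t)) :=
    fun t => gpiece_fd 𝒦 𝒜 T dg hKfield hK halg hTspan hdg (dg t)
  exact Submodule.finiteDimensional_finset_sup T _

lemma transfer (hKfield : ∀ x : K, x ≠ 0 → (∃ γ : Γ, x ∈ 𝒦 γ) → IsUnit x)
    (halg : ∀ (γ : Γ), ∀ c ∈ 𝒦 γ, algebraMap K A c ∈ 𝒜 γ)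
    (hTspan : Submodule.span K (T : Set A) = ⊤) (hdg : ∀ t ∈ T, t ∈ 𝒜 (dg t))
    {I J : AddSubgroup A}
    (hIhom : ∀ x ∈ I, ∀ γ : Γ, ((DirectSum.decompose 𝒜 x γ : 𝒜 γ) : A) ∈ I)
    (hIright : ∀ a : A, ∀ x ∈ I, x * a ∈ I)
    (hJright : ∀ a : A, ∀ x ∈ J, x * a ∈ J)
    (h : ∀ x ∈ I, x ∈ bigW 𝒦 𝒜 T dg halg → x ∈ J) : ∀ x ∈ I, x ∈ J := by
  classical
  have key : ∀ (γ : Γ) (y : A), y ∈ I → y ∈ 𝒜 γ → y ∈ J := by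
    intro γ y hyI hyγ
    by_cases hy0 : y = 0
    · rw [hy0]; exact J.zero_mem
    obtain ⟨c, hc, hrep⟩ := homog_rep 𝒦 𝒜 T dg halg hTspan hdg hyγ
    have hex : ∃ t ∈ T, c t • t ≠ 0 := by
      by_contra hall
      push_neg at hall
      exact hy0 (by rw [hrep]; exact Finset.sum_eq_zero hall)
    obtain ⟨t, htT, hne⟩ := hex
    have hct : c t ≠ 0 := fun hh => hne (by rw [hh, zero_smul])
    obtain ⟨c', hc', hcc'⟩ := homog_inv 𝒦 hKfield (hc t htT) hct
    have h1 : c' • y ∈ I := smul_mem_right hIright c' hyI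
    have h2 : c' • y ∈ 𝒜 (dg t) := by
      have h2' := smul_mem_piece 𝒦 𝒜 halg hc' hyγ
      have he : -(γ - dg t) + γ = dg t := by abel
      rwa [he] at h2'
    have hle : gpiece 𝒦 𝒜 halg (dg t) ≤ bigW 𝒦 𝒜 T dg halg := by
      unfold bigW
      exact Finset.le_sup (f := fun t => gpiece 𝒦 𝒜 halg (dg t)) htT
    have h3 : c' • y ∈ bigW 𝒦 𝒜 T dg halg := hle h2
    have h5 : c t • (c' • y) ∈ J := smul_mem_right hJright _ (h _ h1 h3)
    rwa [smul_smul, hcc', one_smul] at h5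
  intro x hx
  rw [← DirectSum.sum_support_decompose 𝒜 x]
  exact AddSubgroup.sum_mem _ (fun γ _ => key γ _ (hIhom x hx γ) (SetLike.coe_mem _))

/-- dimension of a homogeneous right ideal through the window -/
def dd (halg : ∀ (γ : Γ), ∀ c ∈ 𝒦 γ, algebraMap K A c ∈ 𝒜 γ) (I : AddSubgroup A) : ℕ :=
  Module.finrank (F0 𝒦) ↥(idealSub 𝒦 I ⊓ bigW 𝒦 𝒜 T dg halg)

lemma dd_lt (hKfield : ∀ x : K, x ≠ 0 → (∃ γ : Γ, x ∈ 𝒦 γ) → IsUnit x)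
    (hK : (0 : K) ≠ 1)
    (halg : ∀ (γ : Γ), ∀ c ∈ 𝒦 γ, algebraMap K A c ∈ 𝒜 γ)
    (hTspan : Submodule.span K (T : Set A) = ⊤) (hdg : ∀ t ∈ T, t ∈ 𝒜 (dg t))
    {I J : AddSubgroup A}
    (hIright : ∀ a : A, ∀ x ∈ I, x * a ∈ I)
    (hJhom : ∀ x ∈ J, ∀ γ : Γ, ((DirectSum.decompose 𝒜 x γ : 𝒜 γ) : A) ∈ J)
    (hJright : ∀ a : A, ∀ x ∈ J, x * a ∈ J)
    (hIJ : I ≤ J) (hne : I ≠ J) :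
    dd 𝒦 𝒜 T dg halg I < dd 𝒦 𝒜 T dg halg J := by
  classical
  letI : Field (F0 𝒦) := (F0_isField 𝒦 hKfield hK).toField
  haveI : FiniteDimensional (F0 𝒦) ↥(bigW 𝒦 𝒜 T dg halg) :=
    bigW_fd 𝒦 𝒜 T dg hKfield hK halg hTspan hdg
  haveI : FiniteDimensional (F0 𝒦) ↥(idealSub 𝒦 J ⊓ bigW 𝒦 𝒜 T dg halg) :=
    Submodule.finiteDimensional_of_le inf_le_right
  refine Submodule.finrank_lt_finrank_of_lt ?_
  rw [lt_iff_le_and_ne]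
  constructor
  · refine inf_le_inf_right _ ?_
    intro x hx
    exact ⟨hIJ hx.1, fun c => hIJ (hx.2 c)⟩
  · intro heq
    apply hne
    refine le_antisymm hIJ ?_
    refine transfer 𝒦 𝒜 T dg hKfield halg hTspan hdg hJhom hJright hIright ?_
    intro y hyJ hyW
    have : y ∈ idealSub 𝒦 J ⊓ bigW 𝒦 𝒜 T dg halg :=
      ⟨(mem_idealSub 𝒦 hJright).2 hyJ, hyW⟩
    rw [← heq] at this
    exact (mem_idealSub 𝒦 hIright).1 this.1


/-- `{ y ∈ M | x * y = 0 }` -/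
def lker (x : A) (M : AddSubgroup A) : AddSubgroup A where
  carrier := {y | y ∈ M ∧ x * y = 0}
  add_mem' := fun {a b} ha hb => ⟨M.add_mem ha.1 hb.1, by rw [mul_add, ha.2, hb.2, add_zero]⟩
  zero_mem' := ⟨M.zero_mem, mul_zero x⟩
  neg_mem' := fun {a} ha => ⟨M.neg_mem ha.1, by rw [mul_neg, ha.2, neg_zero]⟩

lemma mem_lker {x : A} {M : AddSubgroup A} {y : A} :
    y ∈ lker x M ↔ y ∈ M ∧ x * y = 0 := Iff.rfl

lemma lker_right {x : A} {M : AddSubgroup A} (hMright : ∀ a : A, ∀ y ∈ M, y * a ∈ M) :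
    ∀ a : A, ∀ y ∈ lker x M, y * a ∈ lker x M := fun a y hy =>
  ⟨hMright a y hy.1, by rw [← mul_assoc, hy.2, zero_mul]⟩

lemma lker_hom {x : A} {γ : Γ} (hx : x ∈ 𝒜 γ) {M : AddSubgroup A}
    (hMhom : ∀ y ∈ M, ∀ δ : Γ, ((DirectSum.decompose 𝒜 y δ : 𝒜 δ) : A) ∈ M) :
    ∀ y ∈ lker x M, ∀ δ : Γ, ((DirectSum.decompose 𝒜 y δ : 𝒜 δ) : A) ∈ lker x M := by
  intro y hy δ
  refine ⟨hMhom y hy.1 δ, ?_⟩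
  have h1 := proj_mul_left 𝒜 hx y δ
  rw [hy.2] at h1
  rw [DirectSum.decompose_zero] at h1
  simpa using h1.symm

/-- `x * M` -/
def xmul (x : A) (M : AddSubgroup A) : AddSubgroup A :=
  AddSubgroup.map (AddMonoidHom.mulLeft x) M

lemma mem_xmul {x : A} {M : AddSubgroup A} {z : A} :
    z ∈ xmul x M ↔ ∃ y ∈ M, x * y = z := by
  constructor
  · rintro ⟨y, hy, rfl⟩
    exact ⟨y, hy, rfl⟩
  · rintro ⟨y, hy, rfl⟩
    exact ⟨y, hy, rfl⟩

lemma xmul_right {x : A} {M : AddSubgroup A} (hMright : ∀ a : A, ∀ y ∈ M, y * a ∈ M) :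
    ∀ a : A, ∀ z ∈ xmul x M, z * a ∈ xmul x M := by
  intro a z hz
  obtain ⟨y, hy, rfl⟩ := mem_xmul.1 hz
  exact mem_xmul.2 ⟨y * a, hMright a y hy, (mul_assoc x y a).symm⟩

lemma xmul_hom {x : A} {γ : Γ} (hx : x ∈ 𝒜 γ) {M : AddSubgroup A}
    (hMhom : ∀ y ∈ M, ∀ δ : Γ, ((DirectSum.decompose 𝒜 y δ : 𝒜 δ) : A) ∈ M) :
    ∀ z ∈ xmul x M, ∀ δ : Γ, ((DirectSum.decompose 𝒜 z δ : 𝒜 δ) : A) ∈ xmul x M := by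
  intro z hz δ
  obtain ⟨y, hy, rfl⟩ := mem_xmul.1 hz
  rw [proj_mul_left' 𝒜 hx y δ]
  exact mem_xmul.2 ⟨_, hMhom y hy (δ - γ), rfl⟩

lemma xmul_le {x : A} {M : AddSubgroup A} (hx : x ∈ M)
    (hMright : ∀ a : A, ∀ y ∈ M, y * a ∈ M) : xmul x M ≤ M := by
  intro z hz
  obtain ⟨y, hy, rfl⟩ := mem_xmul.1 hz
  exact hMright y x hx

lemma ne_bot_iff' {M : AddSubgroup A} : M ≠ ⊥ ↔ ∃ x ∈ M, x ≠ 0 := by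
  rw [Ne, AddSubgroup.eq_bot_iff_forall]
  push_neg
  rfl

/-- In a graded simple algebra, a nonzero homogeneous right ideal contains a homogeneous
element which does not annihilate the ideal. -/
lemma exists_nonann
    (hsimp : ∀ S : AddSubgroup A,
      (∀ x ∈ S, ∀ γ : Γ, ((DirectSum.decompose 𝒜 x γ : 𝒜 γ) : A) ∈ S) →
      (∀ a : A, ∀ x ∈ S, a * x ∈ S) → (∀ a : A, ∀ x ∈ S, x * a ∈ S) →
      S = ⊥ ∨ S = ⊤)
    {I : AddSubgroup A}
    (hIhom : ∀ x ∈ I, ∀ γ : Γ, ((DirectSum.decompose 𝒜 x γ : 𝒜 γ) : A) ∈ I)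
    (hIright : ∀ a : A, ∀ x ∈ I, x * a ∈ I)
    (hI : I ≠ ⊥) :
    ∃ (γ : Γ) (x : A), x ∈ I ∧ x ∈ 𝒜 γ ∧ ∃ y ∈ I, x * y ≠ 0 := by
  classical
  by_contra hcon
  push_neg at hcon
  have hxy : ∀ x ∈ I, ∀ y ∈ I, x * y = 0 := by
    intro x hx y hy
    conv_lhs => rw [← DirectSum.sum_support_decompose 𝒜 x, Finset.sum_mul]
    refine Finset.sum_eq_zero ?_
    intro γ _
    exact hcon γ _ (hIhom x hx γ) (SetLike.coe_mem _) y hy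
  set G : Set A := {z | ∃ a : A, ∃ y ∈ I, z = a * y} with hG
  set S := AddSubgroup.closure G with hS
  have hGmem : ∀ (a : A), ∀ y ∈ I, a * y ∈ S := fun a y hy =>
    AddSubgroup.subset_closure ⟨a, y, hy, rfl⟩
  have hhom : ∀ z ∈ S, ∀ γ : Γ, ((DirectSum.decompose 𝒜 z γ : 𝒜 γ) : A) ∈ S := by
    intro z hz
    refine AddSubgroup.closure_induction
      (p := fun z _ => ∀ γ : Γ, ((DirectSum.decompose 𝒜 z γ : 𝒜 γ) : A) ∈ S) ?_ ?_ ?_ ?_ hz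
    · rintro z ⟨a, y, hy, rfl⟩ γ
      have ha : a * y = ∑ μ ∈ (DirectSum.decompose 𝒜 a).support,
          ((DirectSum.decompose 𝒜 a μ : 𝒜 μ) : A) * y := by
        rw [← Finset.sum_mul, DirectSum.sum_support_decompose]
      rw [ha, proj_finsum]
      refine AddSubgroup.sum_mem _ ?_
      intro μ _
      rw [proj_mul_left' 𝒜 (SetLike.coe_mem _) y γ]
      exact hGmem _ _ (hIhom y hy (γ - μ))
    · intro γ
      rw [DirectSum.decompose_zero]
      simpa using S.zero_mem
    · intro z w _ _ hz' hw' γ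
      rw [DirectSum.decompose_add, DirectSum.add_apply, AddSubgroup.coe_add]
      exact S.add_mem (hz' γ) (hw' γ)
    · intro z _ hz' γ
      rw [DirectSum.decompose_neg]
      show ((-(DirectSum.decompose 𝒜 z)) γ : A) ∈ S
      rw [DFinsupp.neg_apply, AddSubgroup.coe_neg]
      exact S.neg_mem (hz' γ)
  have hleft : ∀ a : A, ∀ z ∈ S, a * z ∈ S := by
    intro a z hz
    refine AddSubgroup.closure_induction (p := fun z _ => a * z ∈ S) ?_ ?_ ?_ ?_ hz
    · rintro z ⟨b, y, hy, rfl⟩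
      rw [← mul_assoc]
      exact hGmem _ _ hy
    · show a * 0 ∈ S
      rw [mul_zero]; exact S.zero_mem
    · intro z w _ _ hz' hw'
      rw [mul_add]; exact S.add_mem hz' hw'
    · intro z _ hz'
      rw [mul_neg]; exact S.neg_mem hz'
  have hright : ∀ a : A, ∀ z ∈ S, z * a ∈ S := by
    intro a z hz
    refine AddSubgroup.closure_induction (p := fun z _ => z * a ∈ S) ?_ ?_ ?_ ?_ hz
    · rintro z ⟨b, y, hy, rfl⟩
      rw [mul_assoc]
      exact hGmem _ _ (hIright a y hy)
    · show (0 : A) * a ∈ S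
      rw [zero_mul]; exact S.zero_mem
    · intro z w _ _ hz' hw'
      rw [add_mul]; exact S.add_mem hz' hw'
    · intro z _ hz'
      rw [neg_mul]; exact S.neg_mem hz'
  obtain ⟨x₀, hx₀I, hx₀⟩ := ne_bot_iff'.1 hI
  have hSne : S ≠ ⊥ := by
    rw [ne_bot_iff']
    exact ⟨x₀, by simpa using hGmem 1 x₀ hx₀I, hx₀⟩
  have hStop : S = ⊤ := (hsimp S hhom hleft hright).resolve_left hSne
  have hann : ∀ z ∈ S, ∀ y ∈ I, y * z = 0 := by
    intro z hz
    refine AddSubgroup.closure_induction (p := fun z _ => ∀ y ∈ I, y * z = 0) ?_ ?_ ?_ ?_ hz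
    · rintro z ⟨b, y', hy', rfl⟩ y hy
      rw [← mul_assoc]
      exact hxy _ (hIright b y hy) _ hy'
    · intro y _
      show y * 0 = 0
      rw [mul_zero]
    · intro z w _ _ hz' hw' y hy
      rw [mul_add, hz' y hy, hw' y hy, add_zero]
    · intro z _ hz' y hy
      rw [mul_neg, hz' y hy, neg_zero]
  refine hI ((AddSubgroup.eq_bot_iff_forall I).2 ?_)
  intro y hy
  have h1S : (1 : A) ∈ S := by rw [hStop]; trivial
  have := hann 1 h1S y hy
  rwa [mul_one] at this


/-- every nonzero homogeneous right ideal contains a nonzero degree-zero idempotent -/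
lemma exists_idempotent
    (hKfield : ∀ x : K, x ≠ 0 → (∃ γ : Γ, x ∈ 𝒦 γ) → IsUnit x)
    (hK : (0 : K) ≠ 1)
    (halg : ∀ (γ : Γ), ∀ c ∈ 𝒦 γ, algebraMap K A c ∈ 𝒜 γ)
    (hTspan : Submodule.span K (T : Set A) = ⊤) (hdg : ∀ t ∈ T, t ∈ 𝒜 (dg t))
    (hsimp : ∀ S : AddSubgroup A,
      (∀ x ∈ S, ∀ γ : Γ, ((DirectSum.decompose 𝒜 x γ : 𝒜 γ) : A) ∈ S) →
      (∀ a : A, ∀ x ∈ S, a * x ∈ S) → (∀ a : A, ∀ x ∈ S, x * a ∈ S) →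
      S = ⊥ ∨ S = ⊤)
    {I : AddSubgroup A}
    (hIhom : ∀ x ∈ I, ∀ γ : Γ, ((DirectSum.decompose 𝒜 x γ : 𝒜 γ) : A) ∈ I)
    (hIright : ∀ a : A, ∀ x ∈ I, x * a ∈ I)
    (hI : I ≠ ⊥) :
    ∃ e : A, e ∈ I ∧ e ∈ 𝒜 0 ∧ e ≠ 0 ∧ e * e = e := by
  classical
  set P : ℕ → Prop := fun n => ∃ M : AddSubgroup A,
    (∀ x ∈ M, ∀ γ : Γ, ((DirectSum.decompose 𝒜 x γ : 𝒜 γ) : A) ∈ M) ∧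
    (∀ a : A, ∀ x ∈ M, x * a ∈ M) ∧ M ≤ I ∧ M ≠ ⊥ ∧ dd 𝒦 𝒜 T dg halg M = n with hP
  have hPex : ∃ n, P n := ⟨_, I, hIhom, hIright, le_refl I, hI, rfl⟩
  obtain ⟨M, hMhom, hMright, hMI, hMne, hMdd⟩ := Nat.find_spec hPex
  have hmin : ∀ N : AddSubgroup A,
      (∀ x ∈ N, ∀ γ : Γ, ((DirectSum.decompose 𝒜 x γ : 𝒜 γ) : A) ∈ N) →
      (∀ a : A, ∀ x ∈ N, x * a ∈ N) → N ≤ M → N ≠ ⊥ → N = M := by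
    intro N hNhom hNright hNM hNne
    by_contra hne
    have hlt := dd_lt 𝒦 𝒜 T dg hKfield hK halg hTspan hdg hNright hMhom hMright hNM hne
    rw [hMdd] at hlt
    exact Nat.find_min hPex hlt ⟨N, hNhom, hNright, le_trans hNM hMI, hNne, rfl⟩
  obtain ⟨γ, x, hxM, hxγ, y₀, hy₀M, hxy₀⟩ := exists_nonann 𝒜 hsimp hMhom hMright hMne
  have hxMeq : xmul x M = M := by
    refine hmin _ (xmul_hom 𝒜 hxγ hMhom) (xmul_right hMright) (xmul_le hxM hMright) ?_
    rw [ne_bot_iff']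
    exact ⟨x * y₀, mem_xmul.2 ⟨y₀, hy₀M, rfl⟩, hxy₀⟩
  obtain ⟨e, heM, hxe⟩ := mem_xmul.1 (hxMeq ▸ hxM)
  have hx0 : x ≠ 0 := fun h => hxy₀ (by rw [h, zero_mul])
  have hlk : lker x M = ⊥ := by
    by_contra hlkne
    have heq := hmin (lker x M) (lker_hom 𝒜 hxγ hMhom) (lker_right hMright)
      (fun y hy => hy.1) hlkne
    have hemem : e ∈ lker x M := by rw [heq]; exact heM
    exact hx0 (by rw [← hxe, hemem.2])
  have hkill : ∀ y ∈ M, x * y = 0 → y = 0 := by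
    intro y hy h0
    have hmem : y ∈ lker x M := ⟨hy, h0⟩
    rw [hlk] at hmem
    simpa using hmem
  have hleftid : ∀ y ∈ M, e * y = y := by
    intro y hy
    have h0 : e * y - y = 0 := by
      refine hkill _ (M.sub_mem (hMright y e heM) hy) ?_
      rw [mul_sub, ← mul_assoc, hxe, sub_self]
    rw [sub_eq_zero] at h0
    exact h0
  set e₀ : A := ((DirectSum.decompose 𝒜 e 0 : 𝒜 0) : A) with he₀
  have he₀M : e₀ ∈ M := hMhom e heM 0
  have he₀0 : e₀ ∈ 𝒜 0 := SetLike.coe_mem _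
  have hleftid₀ : ∀ y ∈ M, e₀ * y = y := by
    intro y hy
    have hcomp : ∀ ν : Γ,
        e₀ * ((DirectSum.decompose 𝒜 y ν : 𝒜 ν) : A) = ((DirectSum.decompose 𝒜 y ν : 𝒜 ν) : A) := by
      intro ν
      have h1 := proj_mul_right 𝒜 (SetLike.coe_mem (DirectSum.decompose 𝒜 y ν)) e 0
      rw [hleftid _ (hMhom y hy ν), zero_add,
        DirectSum.decompose_of_mem_same 𝒜 (SetLike.coe_mem _)] at h1
      exact h1.symm
    conv_lhs => rw [← DirectSum.sum_support_decompose 𝒜 y, Finset.mul_sum]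
    rw [Finset.sum_congr rfl (fun ν _ => hcomp ν)]
    exact DirectSum.sum_support_decompose 𝒜 y
  have he₀ne : e₀ ≠ 0 := by
    intro h0
    apply hMne
    rw [AddSubgroup.eq_bot_iff_forall]
    intro y hy
    rw [← hleftid₀ y hy, h0, zero_mul]
  exact ⟨e₀, hMI he₀M, he₀0, he₀ne, hleftid₀ e₀ he₀M⟩

/-- main auxiliary statement -/
lemma main_aux
    (hKfield : ∀ x : K, x ≠ 0 → (∃ γ : Γ, x ∈ 𝒦 γ) → IsUnit x)
    (hK : (0 : K) ≠ 1)
    (halg : ∀ (γ : Γ), ∀ c ∈ 𝒦 γ, algebraMap K A c ∈ 𝒜 γ)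
    (hTspan : Submodule.span K (T : Set A) = ⊤) (hdg : ∀ t ∈ T, t ∈ 𝒜 (dg t))
    (hsimp : ∀ S : AddSubgroup A,
      (∀ x ∈ S, ∀ γ : Γ, ((DirectSum.decompose 𝒜 x γ : 𝒜 γ) : A) ∈ S) →
      (∀ a : A, ∀ x ∈ S, a * x ∈ S) → (∀ a : A, ∀ x ∈ S, x * a ∈ S) →
      S = ⊥ ∨ S = ⊤)
    {I : AddSubgroup A}
    (hIhom : ∀ x ∈ I, ∀ γ : Γ, ((DirectSum.decompose 𝒜 x γ : 𝒜 γ) : A) ∈ I)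
    (hIright : ∀ a : A, ∀ x ∈ I, x * a ∈ I) :
    ∃ e : A, e ∈ 𝒜 0 ∧ e * e = e ∧ ∀ x : A, x ∈ I ↔ ∃ a : A, x = e * a := by
  classical
  by_cases hI : I = ⊥
  · refine ⟨0, (𝒜 0).zero_mem, by rw [mul_zero], ?_⟩
    intro x
    subst hI
    constructor
    · intro hx
      exact ⟨0, by rw [zero_mul]; exact AddSubgroup.mem_bot.1 hx⟩
    · rintro ⟨a, rfl⟩
      rw [zero_mul]
      exact AddSubgroup.mem_bot.2 rfl
  set P : ℕ → Prop := fun n => ∃ e : A,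
    e ∈ I ∧ e ∈ 𝒜 0 ∧ e * e = e ∧ dd 𝒦 𝒜 T dg halg (lker e I) = n with hP
  have hPex : ∃ n, P n := ⟨_, 0, I.zero_mem, (𝒜 0).zero_mem, by rw [mul_zero], rfl⟩
  obtain ⟨e, heI, he0, hee, hedd⟩ := Nat.find_spec hPex
  by_cases hlk : lker e I = ⊥
  · have hid : ∀ x ∈ I, e * x = x := by
      intro x hx
      have hmem : x - e * x ∈ lker e I :=
        ⟨I.sub_mem hx (hIright x e heI), by rw [mul_sub, ← mul_assoc, hee, sub_self]⟩
      rw [hlk] at hmem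
      have h0 := AddSubgroup.mem_bot.1 hmem
      rw [sub_eq_zero] at h0
      exact h0.symm
    refine ⟨e, he0, hee, ?_⟩
    intro x
    constructor
    · intro hx
      exact ⟨x, (hid x hx).symm⟩
    · rintro ⟨a, rfl⟩
      exact hIright a e heI
  · obtain ⟨f, hflk, hf0, hfne, hff⟩ := exists_idempotent 𝒦 𝒜 T dg hKfield hK halg hTspan hdg hsimp
      (lker_hom 𝒜 he0 hIhom) (lker_right hIright) hlk
    have hfI : f ∈ I := hflk.1
    have hef : e * f = 0 := hflk.2
    have he'I : e + f - f * e ∈ I := I.sub_mem (I.add_mem heI hfI) (hIright e f hfI)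
    have he'0 : e + f - f * e ∈ 𝒜 0 := by
      refine (𝒜 0).sub_mem ((𝒜 0).add_mem he0 hf0) ?_
      have := SetLike.mul_mem_graded hf0 he0
      rwa [zero_add] at this
    have he'e' : (e + f - f * e) * (e + f - f * e) = e + f - f * e := by
      have h1 : (e + f) * (e + f) = e + f + f * e := by
        rw [mul_add, add_mul, add_mul, hee, hef, hff]
        abel
      have h2 : (e + f) * (f * e) = f * e := by
        rw [add_mul, ← mul_assoc, hef, zero_mul, ← mul_assoc, hff, zero_add]
      have h3 : (f * e) * (e + f) = f * e := by
        rw [mul_add, mul_assoc, hee, mul_assoc, hef, mul_zero, add_zero]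
      have h4 : (f * e) * (f * e) = 0 := by
        rw [mul_assoc, ← mul_assoc e f e, hef, zero_mul, mul_zero]
      rw [sub_mul, mul_sub, mul_sub, h1, h2, h3, h4]
      abel
    have hee' : e * (e + f - f * e) = e := by
      rw [mul_sub, mul_add, hee, hef, ← mul_assoc, hef, zero_mul, add_zero, sub_zero]
    have hsub : lker (e + f - f * e) I ≤ lker e I := by
      intro y hy
      refine ⟨hy.1, ?_⟩
      calc e * y = (e * (e + f - f * e)) * y := by rw [hee']
        _ = e * ((e + f - f * e) * y) := mul_assoc _ _ _
        _ = 0 := by rw [hy.2, mul_zero]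
    have hfnot : f ∉ lker (e + f - f * e) I := by
      intro hy
      apply hfne
      have h5 : (e + f - f * e) * f = f := by
        rw [sub_mul, add_mul, hef, hff, zero_add, mul_assoc, hef, mul_zero, sub_zero]
      rw [← h5, hy.2]
    have hne : lker (e + f - f * e) I ≠ lker e I := by
      intro h
      exact hfnot (h ▸ hflk)
    have hlt := dd_lt 𝒦 𝒜 T dg hKfield hK halg hTspan hdg
      (lker_right hIright) (lker_hom 𝒜 he0 hIhom) (lker_right hIright) hsub hne
    rw [hedd] at hlt
    exact absurd ⟨e + f - f * e, he'I, he'0, he'e', rfl⟩ (Nat.find_min hPex hlt)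

end Aux

/-- **Statement 9** (`ideal.lem`).
Let `𝖠` be a graded simple algebra, finite-dimensional over a graded field `𝖪` (all
gradings by a divisible totally ordered abelian group `Γ`), and let `I ⊆ 𝖠` be a
homogeneous right ideal.  Then there is a homogeneous idempotent `e ∈ 𝖠` of degree `0`
such that `I = e𝖠`. -/
theorem statement_9
    {Γ : Type} [AddCommGroup Γ] [LinearOrder Γ] [IsOrderedAddMonoid Γ]
    (hΓ : ∀ n : ℕ, n ≠ 0 → ∀ γ : Γ, ∃ δ : Γ, n • δ = γ)
    {K : Type} [CommRing K] (𝒦 : Γ → AddSubgroup K) [GradedRing 𝒦]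
    (hKfield : ∀ x : K, x ≠ 0 → (∃ γ : Γ, x ∈ 𝒦 γ) → IsUnit x)
    {A : Type} [Ring A] [Algebra K A] [Module.Finite K A]
    (𝒜 : Γ → AddSubgroup A) [GradedRing 𝒜]
    (halg : ∀ (γ : Γ), ∀ c ∈ 𝒦 γ, algebraMap K A c ∈ 𝒜 γ)
    (hsimple : Nontrivial A ∧
      ∀ S : AddSubgroup A,
        (∀ x ∈ S, ∀ γ : Γ, ((DirectSum.decompose 𝒜 x γ : 𝒜 γ) : A) ∈ S) →
        (∀ a : A, ∀ x ∈ S, a * x ∈ S) → (∀ a : A, ∀ x ∈ S, x * a ∈ S) →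
        S = ⊥ ∨ S = ⊤)
    (I : AddSubgroup A)
    (hIhom : ∀ x ∈ I, ∀ γ : Γ, ((DirectSum.decompose 𝒜 x γ : 𝒜 γ) : A) ∈ I)
    (hIright : ∀ a : A, ∀ x ∈ I, x * a ∈ I) :
    ∃ e : A, e ∈ 𝒜 0 ∧ IsIdempotentElem e ∧ ∀ x : A, x ∈ I ↔ ∃ a : A, x = e * a := by
  classical
  obtain ⟨hA, hsimp⟩ := hsimple
  have hK : (0 : K) ≠ 1 := by
    intro h
    have h01 : (0 : A) = 1 := by
      calc (0 : A) = algebraMap K A 0 := (map_zero _).symm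
        _ = algebraMap K A 1 := by rw [h]
        _ = 1 := map_one _
    exact zero_ne_one h01
  obtain ⟨s, hs⟩ := ‹Module.Finite K A›.fg_top
  set T : Finset A := s.biUnion
    (fun a => (DirectSum.decompose 𝒜 a).support.image
      (fun γ => ((DirectSum.decompose 𝒜 a γ : 𝒜 γ) : A))) with hT
  have hThom : ∀ t ∈ T, ∃ γ : Γ, t ∈ 𝒜 γ := by
    intro t ht
    obtain ⟨a, _, hta⟩ := Finset.mem_biUnion.1 ht
    obtain ⟨γ, _, rfl⟩ := Finset.mem_image.1 hta
    exact ⟨γ, SetLike.coe_mem _⟩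
  set dg : A → Γ := fun t => if h : ∃ γ : Γ, t ∈ 𝒜 γ then h.choose else 0 with hdg'
  have hdg : ∀ t ∈ T, t ∈ 𝒜 (dg t) := by
    intro t ht
    have h := hThom t ht
    rw [hdg']
    simp only [dif_pos h]
    exact h.choose_spec
  have hTspan : Submodule.span K (T : Set A) = ⊤ := by
    rw [eq_top_iff, ← hs]
    refine Submodule.span_le.2 ?_
    intro a ha
    rw [← DirectSum.sum_support_decompose 𝒜 a]
    refine Submodule.sum_mem _ ?_
    intro γ hγ
    refine Submodule.subset_span ?_
    exact Finset.mem_coe.2 (Finset.mem_biUnion.2 ⟨a, ha, Finset.mem_image.2 ⟨γ, hγ, rfl⟩⟩)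
  obtain ⟨e, he0, hee, hiff⟩ :=
    main_aux 𝒦 𝒜 T dg hKfield hK halg hTspan hdg hsimp hIhom hIright
  exact ⟨e, he0, hee, hiff⟩

end PaperVal
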